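/- Let d ≥ 3 and w > 0. Define c_n = a'_n/a_n where a_n, a'_n are the spanning-tree counts of the perfect-tree product satisfying a'_n = w(2a_{n-1} + a'_{n-1}/w)^{d-1} and a_n = a'_n + (d-1)a_{n-1}(2a_{n-1} + a'_{n-1}/w)^{d-2}, with a_0 = a'_0 = w. Then c_n satisfies the recursion c_n = 1/(1 + (d−1)/(2w + c_{n−1})), the sequence c_n is monotone and lies in [0,1], and hence converges; its limit c is the unique positive root of c² + c(2w+d−2) − 2w = 0. -/

import Mathlib

open Filter

/-- With `a_0 = a'_0 = w` and the spanning-tree recursions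
`a'_n = w(2a_{n-1} + a'_{n-1}/w)^{d-1}` and
`a_n = a'_n + (d-1)a_{n-1}(2a_{n-1} + a'_{n-1}/w)^{d-2}`, the sequence
`c_n = a'_n/a_n` satisfies `c_n = 1/(1 + (d−1)/(2w + c_{n−1}))`, is monotone,
lies in `[0,1]`, and converges to the unique positive root of
`c² + c(2w+d−2) − 2w = 0`. -/
theorem stmt_9 (d : ℕ) (hd : 3 ≤ d) (w : ℝ) (hw : 0 < w) (a a' : ℕ → ℝ)
    (ha0 : a 0 = w) (ha'0 : a' 0 = w)
    (ha' : ∀ n : ℕ, 1 ≤ n → a' n = w * (2 * a (n - 1) + a' (n - 1) / w) ^ (d - 1))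
    (ha : ∀ n : ℕ, 1 ≤ n →
      a n = a' n + ((d : ℝ) - 1) * a (n - 1) * (2 * a (n - 1) + a' (n - 1) / w) ^ (d - 2)) :
    (∀ n : ℕ, 1 ≤ n →
      a' n / a n = 1 / (1 + ((d : ℝ) - 1) / (2 * w + a' (n - 1) / a (n - 1)))) ∧
    (Monotone (fun n => a' n / a n) ∨ Antitone (fun n => a' n / a n)) ∧
    (∀ n : ℕ, a' n / a n ∈ Set.Icc (0 : ℝ) 1) ∧
    (∃ c : ℝ, Tendsto (fun n => a' n / a n) atTop (nhds c) ∧ 0 < c ∧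
      c ^ 2 + c * (2 * w + d - 2) - 2 * w = 0) := by
  have hd3 : (3:ℝ) ≤ (d:ℝ) := by exact_mod_cast hd
  have hd1 : (0:ℝ) < (d:ℝ) - 1 := by linarith
  -- positivity of a, a'
  have hpos : ∀ n, 0 < a n ∧ 0 < a' n := by
    intro n
    induction n with
    | zero => exact ⟨ha0 ▸ hw, ha'0 ▸ hw⟩
    | succ n ih =>
      have hP : 0 < 2 * a n + a' n / w := by
        have := ih.1; have := ih.2; positivity
      have h1 : 0 < a' (n + 1) := by
        rw [ha' (n+1) (by omega)]; simp only [Nat.add_sub_cancel]; positivity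
      refine ⟨?_, h1⟩
      rw [ha (n+1) (by omega), ha' (n+1) (by omega)]; simp only [Nat.add_sub_cancel]
      have := ih.1; have := ih.2
      positivity
  -- key recursion
  have hkey : ∀ n : ℕ, a' (n+1) / a (n+1) =
      1 / (1 + ((d : ℝ) - 1) / (2 * w + a' n / a n)) := by
    intro n
    have han := (hpos n).1
    have han' := (hpos n).2
    have hP : 0 < 2 * a n + a' n / w := by positivity
    have hwP : w * (2 * a n + a' n / w) = 2 * w * a n + a' n := by
      field_simp
    have hq : 0 < 2 * w + a' n / a n := by positivity
    have hds : d - 1 = (d - 2) + 1 := by omega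
    rw [ha' (n+1) (by omega), ha (n+1) (by omega), ha' (n+1) (by omega)]
    simp only [Nat.add_sub_cancel]
    rw [hds, pow_succ]
    have hD : 0 < 1 + ((d:ℝ) - 1) / (2 * w + a' n / a n) := by positivity
    have hden : 0 < w * ((2 * a n + a' n / w) ^ (d-2) * (2 * a n + a' n / w)) +
        ((d:ℝ) - 1) * a n * (2 * a n + a' n / w) ^ (d - 2) := by positivity
    rw [div_eq_div_iff (ne_of_gt hden) (ne_of_gt hD)]
    have hPd : (0:ℝ) < (2 * a n + a' n / w) ^ (d-2) := by positivity
    field_simp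
  -- bounds
  have hbound : ∀ n : ℕ, a' n / a n ∈ Set.Icc (0 : ℝ) 1 := by
    intro n
    constructor
    · exact le_of_lt (div_pos (hpos n).2 (hpos n).1)
    · rcases Nat.eq_zero_or_pos n with h | h
      · subst h; rw [ha0, ha'0, div_self (ne_of_gt hw)]
      · have h1 := ha n h
        have hm1 : 0 < a (n-1) := (hpos (n-1)).1
        have hm2 : 0 < a' (n-1) := (hpos (n-1)).2
        have hP : (0:ℝ) < (2 * a (n-1) + a' (n-1) / w) ^ (d - 2) := by positivity
        have hprod := mul_pos (mul_pos hd1 hm1) hP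
        have : a' n ≤ a n := by linarith
        exact div_le_one_of_le₀ this (le_of_lt (hpos n).1)
  -- monotonicity of f
  have hf_mono : ∀ x y : ℝ, 0 ≤ x → x ≤ y →
      1 / (1 + ((d:ℝ) - 1) / (2 * w + x)) ≤ 1 / (1 + ((d:ℝ) - 1) / (2 * w + y)) := by
    intro x y hx hxy
    have h1 : 0 < 2 * w + x := by linarith
    have h2 : 0 < 2 * w + y := by linarith
    have h3 : ((d:ℝ) - 1) / (2 * w + y) ≤ ((d:ℝ) - 1) / (2 * w + x) :=
      div_le_div_of_nonneg_left (le_of_lt hd1) h1 (by linarith)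
    have h4 : 0 < 1 + ((d:ℝ) - 1) / (2 * w + y) := by positivity
    exact one_div_le_one_div_of_le h4 (by linarith)
  -- antitone
  have hstep : ∀ n : ℕ, a' (n+1) / a (n+1) ≤ a' n / a n := by
    intro n
    induction n with
    | zero =>
      rw [ha0, ha'0, div_self (ne_of_gt hw)]
      exact (hbound 1).2
    | succ n ih =>
      rw [hkey (n+1)]
      nth_rewrite 2 [hkey n]
      exact hf_mono _ _ (hbound (n+1)).1 ih
  have hanti : Antitone (fun n => a' n / a n) := antitone_nat_of_succ_le hstep
  refine ⟨fun n hn => by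
      obtain ⟨m, rfl⟩ : ∃ m, n = m + 1 := ⟨n - 1, by omega⟩
      simpa using hkey m, Or.inr hanti, hbound, ?_⟩
  -- convergence
  have hbdd : BddBelow (Set.range fun n => a' n / a n) :=
    ⟨0, by rintro x ⟨n, rfl⟩; exact (hbound n).1⟩
  set c : ℝ := ⨅ n, a' n / a n with hc
  have htend : Tendsto (fun n => a' n / a n) atTop (nhds c) :=
    tendsto_atTop_ciInf hanti hbdd
  -- lower bound on c
  have hL : (0:ℝ) < 2 * w / (2 * w + ((d:ℝ) - 1)) := by positivity
  have hlow : ∀ n : ℕ, 2 * w / (2 * w + ((d:ℝ) - 1)) ≤ a' n / a n := by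
    intro n
    rcases Nat.eq_zero_or_pos n with h | h
    · subst h; rw [ha0, ha'0, div_self (ne_of_gt hw)]
      rw [div_le_one (by positivity)]; linarith
    · obtain ⟨m, rfl⟩ : ∃ m, n = m + 1 := ⟨n - 1, by omega⟩
      rw [hkey m]
      have h0 : 2 * w / (2 * w + ((d:ℝ) - 1)) = 1 / (1 + ((d:ℝ) - 1) / (2 * w + 0)) := by
        field_simp
        ring
      rw [h0]
      exact hf_mono 0 _ le_rfl (hbound m).1
  have hcpos : 0 < c := lt_of_lt_of_le hL (le_ciInf hlow)
  have hc2w : 0 < 2 * w + c := by linarith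
  -- limit equation
  have hfc : Tendsto (fun n => 1 / (1 + ((d:ℝ) - 1) / (2 * w + a' n / a n))) atTop
      (nhds (1 / (1 + ((d:ℝ) - 1) / (2 * w + c)))) := by
    have h1 : Tendsto (fun n => 2 * w + a' n / a n) atTop (nhds (2 * w + c)) :=
      tendsto_const_nhds.add htend
    have h2 : Tendsto (fun n => ((d:ℝ) - 1) / (2 * w + a' n / a n)) atTop
        (nhds (((d:ℝ) - 1) / (2 * w + c))) :=
      tendsto_const_nhds.div h1 (ne_of_gt hc2w)
    have h3 : Tendsto (fun n => 1 + ((d:ℝ) - 1) / (2 * w + a' n / a n)) atTop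
        (nhds (1 + ((d:ℝ) - 1) / (2 * w + c))) := tendsto_const_nhds.add h2
    exact tendsto_const_nhds.div h3 (by positivity)
  have hshift : Tendsto (fun n => a' (n+1) / a (n+1)) atTop (nhds c) :=
    htend.comp (tendsto_add_atTop_nat 1)
  have heq : c = 1 / (1 + ((d:ℝ) - 1) / (2 * w + c)) := by
    refine tendsto_nhds_unique hshift ?_
    simpa only [hkey] using hfc
  refine ⟨c, htend, hcpos, ?_⟩
  have hD : 0 < 1 + ((d:ℝ) - 1) / (2 * w + c) := by positivity
  field_simp at heq
  nlinarith [heq]
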